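/- Let p = 2d+1 >= 5 be prime. For each g >= 1 and 0 <= c <= d-1 one has the closed formula (-1)^c delta_g^{(2c)} = (4/p) sum_{j=1}^{(p-1)/2} sin(pi j (2c+1)/p) sin(pi j / p) Lambda_j^g, where Lambda_j = ceil((p-1)/4) + 2 sum_{k=1}^{(p-3)/2} (-1)^k ceil((p-2k-1)/4) cos(2 k j pi / p), and delta_g^{(2c)} is defined by delta_1^{(2c)} = d-c and delta_{g+1}^{(2c)} = sum_{a=0}^{d-1}(d - max(a,c)) delta_g^{(2a)}. -/

import Mathlib

open Real Finset

/-- `⌈n/2⌉` over `ℚ`, as a function `ℤ → ℤ`. -/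
private def g2 (n : ℤ) : ℤ := ⌈(n : ℚ) / 2⌉

private lemma g2_even (n t : ℤ) (h : n = 2 * t) : g2 n = t := by
  subst h
  rw [g2, show ((2 * t : ℤ) : ℚ) / 2 = (t : ℚ) by push_cast; ring, Int.ceil_intCast]

private lemma g2_odd (n t : ℤ) (h : n = 2 * t + 1) : g2 n = t + 1 := by
  subst h
  rw [g2, show ((2 * t + 1 : ℤ) : ℚ) / 2 = (1 / 2 : ℚ) + (t : ℤ) by push_cast; ring,
    Int.ceil_add_intCast]
  have : ⌈(1 / 2 : ℚ)⌉ = 1 := by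
    rw [Int.ceil_eq_iff] <;> norm_num
  omega

/-- The signed coefficient `B d k = (-1)^k ⌈(d-k)/2⌉`. -/
private noncomputable def Bc (d k : ℕ) : ℝ := (-1) ^ k * ((g2 ((d : ℤ) - k) : ℤ) : ℝ)

private lemma npow_neg_one_congr {a b : ℕ} (h : a % 2 = b % 2) : (-1 : ℝ) ^ a = (-1) ^ b := by
  rw [neg_one_pow_eq_pow_mod_two, h, ← neg_one_pow_eq_pow_mod_two]

private lemma Bc_rel (d k : ℕ) (hk : k + 1 ≤ d) :
    Bc d k + 2 * Bc d (k + 1) + Bc d (k + 2) = (-1) ^ (d + 1) := by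
  rcases Int.even_or_odd ((d : ℤ) - k - 1) with ⟨t, ht⟩ | ⟨t, ht⟩
  · have h0 : g2 ((d : ℤ) - k) = t + 1 := g2_odd _ t (by omega)
    have h1 : g2 ((d : ℤ) - (k + 1)) = t := g2_even _ t (by push_cast; omega)
    have h2 : g2 ((d : ℤ) - (k + 2)) = t - 1 + 1 := g2_odd _ (t - 1) (by push_cast; omega)
    have hpar : (d + 1) % 2 = k % 2 := by omega
    simp only [Bc]
    push_cast
    rw [h0, h1, h2, npow_neg_one_congr hpar]
    push_cast
    ring
  · have h0 : g2 ((d : ℤ) - k) = t + 1 := g2_even _ (t + 1) (by omega)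
    have h1 : g2 ((d : ℤ) - (k + 1)) = t + 1 := g2_odd _ t (by push_cast; omega)
    have h2 : g2 ((d : ℤ) - (k + 2)) = t := g2_even _ t (by push_cast; omega)
    have hpar : (d + 1) % 2 = (k + 1) % 2 := by omega
    simp only [Bc]
    push_cast
    rw [h0, h1, h2, npow_neg_one_congr hpar]
    push_cast
    ring

private lemma Bc_boundary (d : ℕ) (hd : 1 ≤ d) :
    2 * Bc d 0 + 2 * Bc d 1 = 1 + (-1) ^ (d + 1) := by
  rcases Nat.even_or_odd d with ⟨t, ht⟩ | ⟨t, ht⟩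
  · have h0 : g2 ((d : ℤ) - 0) = t := g2_even _ t (by push_cast; omega)
    have h1 : g2 ((d : ℤ) - 1) = (t - 1) + 1 := g2_odd _ (t - 1) (by push_cast; omega)
    have hpar : (d + 1) % 2 = 1 % 2 := by omega
    simp only [Bc]
    push_cast
    rw [h0, h1, npow_neg_one_congr hpar]
    push_cast
    ring
  · have h0 : g2 ((d : ℤ) - 0) = t + 1 := g2_odd _ t (by push_cast; omega)
    have h1 : g2 ((d : ℤ) - 1) = t := g2_even _ t (by push_cast; omega)
    have hpar : (d + 1) % 2 = 0 % 2 := by omega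
    simp only [Bc]
    push_cast
    rw [h0, h1, npow_neg_one_congr hpar]
    push_cast
    ring

private lemma Bc_top (d : ℕ) : Bc d d = 0 := by
  rw [Bc, g2_even _ 0 (by push_cast; ring)]
  simp

private lemma Bc_top' (d : ℕ) : Bc d (d + 1) = 0 := by
  rw [Bc, g2_odd _ (-1) (by push_cast; ring)]
  simp


private lemma sum_cos_eq (p d n : ℕ) (hpd : p = 2 * d + 1) (hn : ¬ p ∣ n) :
    ∑ k ∈ Finset.Icc 1 d, Real.cos (2 * π * n * k / p) = -(1 / 2) := by
  have hp0 : (p : ℝ) ≠ 0 := Nat.cast_ne_zero.mpr (by omega)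
  set f : ℕ → ℝ := fun k => Real.cos (2 * π * n * k / p) with hf
  set z : ℂ := Complex.exp (2 * π * n / p * Complex.I) with hz
  have hre : ∀ k : ℕ, (z ^ k).re = f k := by
    intro k
    rw [hz, ← Complex.exp_nat_mul]
    have : (k : ℂ) * (2 * π * n / p * Complex.I)
        = ((2 * π * n * k / p : ℝ) : ℂ) * Complex.I := by
      push_cast; ring
    rw [this, Complex.exp_ofReal_mul_I_re]
  have hzp : z ^ p = 1 := by
    rw [hz, ← Complex.exp_nat_mul]
    have hpc : (p : ℂ) ≠ 0 := Nat.cast_ne_zero.mpr (by omega)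
    have : (p : ℂ) * (2 * π * n / p * Complex.I) = (n : ℕ) * (2 * π * Complex.I) := by
      field_simp
    rw [this, Complex.exp_nat_mul_two_pi_mul_I]
  have hz1 : z ≠ 1 := by
    intro h
    rw [hz, Complex.exp_eq_one_iff] at h
    obtain ⟨m, hm⟩ := h
    have hπ : (π : ℂ) ≠ 0 := Complex.ofReal_ne_zero.mpr Real.pi_ne_zero
    have hI : (Complex.I : ℂ) ≠ 0 := Complex.I_ne_zero
    have hpc : (p : ℂ) ≠ 0 := Nat.cast_ne_zero.mpr (by omega)
    have h20 : (2 * (π:ℂ) * Complex.I) ≠ 0 := mul_ne_zero (mul_ne_zero two_ne_zero hπ) hI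
    have h3 : 2*(π:ℂ)*Complex.I*((n:ℂ)/p) = 2*(π:ℂ)*Complex.I*m := by linear_combination hm
    have h4 : (n:ℂ)/p = m := mul_left_cancel₀ h20 h3
    have hnm : (n : ℂ) = m * p := by
      field_simp at h4
      rw [h4]; ring
    have hint : (n : ℤ) = m * p := by exact_mod_cast hnm
    exact hn (Int.ofNat_dvd.mp ⟨m, by linear_combination hint⟩)
  have hgeom : ∑ k ∈ Finset.range p, z ^ k = 0 := by
    rw [geom_sum_eq hz1, hzp]
    simp
  have hsum0 : ∑ k ∈ Finset.range p, f k = 0 := by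
    have := congrArg Complex.re hgeom
    rw [Complex.re_sum] at this
    simpa [hre] using this
  have e1 : (∑ k ∈ Finset.Ico 0 (d + 1), f k) + ∑ k ∈ Finset.Ico (d + 1) (2 * d + 1), f k
      = ∑ k ∈ Finset.Ico 0 (2 * d + 1), f k :=
    Finset.sum_Ico_consecutive f (by omega) (by omega)
  have e2 : (∑ k ∈ Finset.Ico 0 1, f k) + ∑ k ∈ Finset.Ico 1 (d + 1), f k
      = ∑ k ∈ Finset.Ico 0 (d + 1), f k :=
    Finset.sum_Ico_consecutive f (by omega) (by omega)
  have e3 : ∑ k ∈ Finset.Ico 0 1, f k = 1 := by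
    simp [hf]
  have e4 : ∑ k ∈ Finset.Icc 1 d, f k = ∑ k ∈ Finset.Ico 1 (d + 1), f k := by
    rw [Finset.Ico_add_one_right_eq_Icc]
  -- the upper half equals the lower half
  have e5 : ∑ k ∈ Finset.Ico (d + 1) (2 * d + 1), f k = ∑ k ∈ Finset.Ico 1 (d + 1), f k := by
    rw [Finset.sum_Ico_eq_sum_range, Finset.sum_Ico_eq_sum_range]
    have hd : 2 * d + 1 - (d + 1) = d := by omega
    have hd1 : d + 1 - 1 = d := by omega
    rw [hd, hd1, ← Finset.sum_range_reflect]
    refine Finset.sum_congr rfl fun i hi => ?_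
    rw [Finset.mem_range] at hi
    have harg : d + 1 + (d - 1 - i) = 2 * d - i := by omega
    rw [harg, hf]
    have hcast : ((2 * d - i : ℕ) : ℝ) = 2 * (d : ℝ) - i := by
      push_cast [Nat.cast_sub (by omega : i ≤ 2 * d)]
      ring
    have hp2 : (p : ℝ) = 2 * d + 1 := by exact_mod_cast congrArg (Nat.cast (R := ℝ)) hpd
    have harg2 : 2 * π * n * ((2 * d : ℝ) - i) / p = n * (2 * π) - 2 * π * n * (1 + i) / p := by
      rw [hp2] at hp0 ⊢
      field_simp
      ring
    simp only [hcast]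
    rw [harg2, Real.cos_nat_mul_two_pi_sub]
    congr 1
    push_cast
    ring
  have e0 : ∑ k ∈ Finset.range p, f k = ∑ k ∈ Finset.Ico 0 (2 * d + 1), f k := by
    rw [Finset.range_eq_Ico, hpd]
  rw [e4]
  linarith [e0, e1, e2, e3, e5, hsum0]


private lemma star (e : ℕ) (θ : ℝ) :
    (Bc (e + 1) 0 + 2 * ∑ k ∈ Finset.Icc 1 e, Bc (e + 1) k * Real.cos (2 * k * θ))
        * (2 + 2 * Real.cos (2 * θ))
      = 1 + (-1) ^ (e + 2)
        + 2 * (-1) ^ (e + 2) * ∑ k ∈ Finset.Icc 1 (e + 1), Real.cos (2 * k * θ) := by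
  set n := e + 1 with hn
  set F : ℕ → ℝ := fun k => Real.cos (2 * k * θ) with hF
  -- convert Icc sums to range sums
  have hconv : ∀ (u : ℕ → ℝ) (m : ℕ), ∑ k ∈ Finset.Icc 1 m, u k
      = ∑ i ∈ Finset.range m, u (i + 1) := by
    intro u m
    rw [← Finset.Ico_add_one_right_eq_Icc, Finset.sum_Ico_eq_sum_range]
    exact Finset.sum_congr rfl fun i _ => by rw [Nat.add_comm]
  have hext : ∑ k ∈ Finset.Icc 1 n, Bc n k * F k
      = ∑ k ∈ Finset.Icc 1 e, Bc n k * F k := by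
    rw [hn, Finset.sum_Icc_succ_top (by omega : 1 ≤ e + 1), ← hn, Bc_top]
    ring
  set S := ∑ i ∈ Finset.range n, Bc n (i + 1) * F (i + 1) with hS
  set T1 := ∑ i ∈ Finset.range n, Bc n (i + 1) * F (i + 2) with hT1
  set T2 := ∑ i ∈ Finset.range n, Bc n (i + 1) * F i with hT2
  set U := ∑ i ∈ Finset.range n, Bc n i * F (i + 1) with hU
  set W := ∑ i ∈ Finset.range n, Bc n (i + 2) * F (i + 1) with hW
  set X := ∑ i ∈ Finset.range n, F (i + 1) with hX
  have hS' : ∑ k ∈ Finset.Icc 1 e, Bc n k * F k = S := by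
    rw [← hext, hconv]
  have hX' : ∑ k ∈ Finset.Icc 1 n, F k = X := hconv _ _
  -- product-to-sum
  have hprod : ∀ i : ℕ, F (i + 2) + F i = 2 * F (i + 1) * F 1 := by
    intro i
    simp only [hF]
    push_cast
    rw [show 2 * ((i : ℝ) + 2) * θ = 2 * ((i : ℝ) + 1) * θ + 2 * 1 * θ by ring,
      show 2 * (i : ℝ) * θ = 2 * ((i : ℝ) + 1) * θ - 2 * 1 * θ by ring,
      Real.cos_add, Real.cos_sub]
    ring
  have h1 : 4 * F 1 * S = 2 * T1 + 2 * T2 := by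
    rw [hS, hT1, hT2, Finset.mul_sum, Finset.mul_sum, Finset.mul_sum,
      ← Finset.sum_add_distrib]
    refine Finset.sum_congr rfl fun i _ => ?_
    linear_combination (-2 * Bc n (i + 1)) * hprod i
  -- shifts
  have hshift : ∀ g : ℕ → ℝ, ∑ i ∈ Finset.range n, g (i + 1)
      = ∑ i ∈ Finset.range n, g i + g n - g 0 := by
    intro g
    have a1 := Finset.sum_range_succ g n
    have a2 := Finset.sum_range_succ' g n
    linarith [a1, a2]
  have h2 : T1 = U + Bc n n * F (n + 1) - Bc n 0 * F 1 := by
    rw [hT1, hU]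
    exact hshift (fun i => Bc n i * F (i + 1))
  have h3 : T2 = W - Bc n (n + 1) * F n + Bc n 1 * F 0 := by
    have := hshift (fun i => Bc n (i + 1) * F i)
    rw [hT2, hW]
    linarith [this]
  have hF0 : F 0 = 1 := by simp [hF]
  have h4 : U + 2 * S + W = (-1) ^ (n + 1) * X := by
    rw [hU, hS, hW, hX, Finset.mul_sum, Finset.mul_sum,
      ← Finset.sum_add_distrib, ← Finset.sum_add_distrib]
    refine Finset.sum_congr rfl fun i hi => ?_
    rw [Finset.mem_range] at hi
    linear_combination F (i + 1) * Bc_rel n i (by omega)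
  have h5 := Bc_boundary n (by omega)
  have hB0 := Bc_top n
  have hB1 := Bc_top' n
  have hexp : (Bc n 0 + 2 * S) * (2 + 2 * F 1)
      = 2 * Bc n 0 + 2 * (Bc n 0 * F 1) + 4 * S + 4 * F 1 * S := by ring
  have hgoal : (-1 : ℝ) ^ (e + 2) = (-1) ^ (n + 1) := by rw [hn]
  have hcosF : Real.cos (2 * θ) = F 1 := by rw [hF]; norm_num
  have hLHS : ∑ k ∈ Finset.Icc 1 e, Bc n k * Real.cos (2 * (k : ℝ) * θ) = S := by
    have h0 : ∑ k ∈ Finset.Icc 1 e, Bc n k * Real.cos (2 * (k : ℝ) * θ)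
        = ∑ k ∈ Finset.Icc 1 e, Bc n k * F k := Finset.sum_congr rfl fun k _ => rfl
    rw [h0, hS']
  have hRHS : ∑ k ∈ Finset.Icc 1 (e + 1), Real.cos (2 * (k : ℝ) * θ) = X := by
    have h0 : ∑ k ∈ Finset.Icc 1 (e + 1), Real.cos (2 * (k : ℝ) * θ)
        = ∑ k ∈ Finset.Icc 1 n, F k := Finset.sum_congr rfl fun k _ => rfl
    rw [h0, hX']
  rw [hLHS, hRHS, hcosF, hexp, h1, hgoal]
  rw [hB0] at h2
  rw [hB1] at h3
  rw [hF0] at h3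
  nlinarith [h2, h3, h4, h5]


private lemma lam_eq (p d : ℕ) (hpd : p = 2 * d + 1) (hd : 2 ≤ d) (j : ℕ)
    (hj1 : 1 ≤ j) (hjd : j ≤ d) :
    (Bc d 0 + 2 * ∑ k ∈ Finset.Icc 1 (d - 1), Bc d k * Real.cos (2 * k * j * π / p))
      * (4 * Real.cos (π * j / p) ^ 2) = 1 := by
  obtain ⟨e, rfl⟩ : ∃ e, d = e + 1 := ⟨d - 1, by omega⟩
  have hsimp : e + 1 - 1 = e := rfl
  rw [hsimp]
  have hsum1 : ∑ k ∈ Finset.Icc 1 e, Bc (e + 1) k * Real.cos (2 * (k : ℝ) * j * π / p)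
      = ∑ k ∈ Finset.Icc 1 e, Bc (e + 1) k * Real.cos (2 * (k : ℝ) * (π * j / p)) :=
    Finset.sum_congr rfl fun k _ => by rw [show 2 * (k : ℝ) * (j : ℝ) * π / p
      = 2 * (k : ℝ) * (π * j / p) by ring]
  have h4 : 4 * Real.cos (π * j / p) ^ 2 = 2 + 2 * Real.cos (2 * (π * j / p)) := by
    rw [Real.cos_sq]; ring
  rw [hsum1, h4, star e (π * j / p)]
  have hdvd : ¬ p ∣ j := fun h => by have := Nat.le_of_dvd (by omega) h; omega
  have hsum2 : ∑ k ∈ Finset.Icc 1 (e + 1), Real.cos (2 * (k : ℝ) * (π * j / p)) = -(1 / 2) := by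
    rw [← sum_cos_eq p (e + 1) j hpd hdvd]
    exact Finset.sum_congr rfl fun k _ => by congr 1; ring
  rw [hsum2]
  ring

private lemma sin_tel1 (θ : ℝ) (n : ℕ) :
    2 * Real.cos θ * ∑ a ∈ Finset.range n, (-1 : ℝ) ^ a * Real.sin ((2 * a + 1) * θ)
      = -((-1 : ℝ) ^ n * Real.sin (2 * n * θ)) := by
  induction n with
  | zero => simp
  | succ m ih =>
    rw [Finset.sum_range_succ, mul_add, ih]
    push_cast
    rw [show 2 * ((m : ℝ) + 1) * θ = (2 * (m : ℝ) + 1) * θ + θ by ring,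
      show 2 * (m : ℝ) * θ = (2 * (m : ℝ) + 1) * θ - θ by ring,
      Real.sin_add, Real.sin_sub]
    ring

private lemma sin_tel2 (θ : ℝ) (c d : ℕ) (hcd : c ≤ d) :
    2 * Real.cos θ * ∑ m ∈ Finset.Ico c d, (-1 : ℝ) ^ m * Real.sin ((2 * m + 2) * θ)
      = (-1 : ℝ) ^ c * Real.sin ((2 * c + 1) * θ)
        - (-1 : ℝ) ^ d * Real.sin ((2 * d + 1) * θ) := by
  set f : ℕ → ℝ := fun m => (-1 : ℝ) ^ m * Real.sin ((2 * m + 1) * θ) with hf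
  have hterm : ∀ m : ℕ,
      2 * Real.cos θ * ((-1 : ℝ) ^ m * Real.sin ((2 * (m : ℝ) + 2) * θ)) = f m - f (m + 1) := by
    intro m
    simp only [hf]
    push_cast
    rw [show (2 * ((m : ℝ) + 1) + 1) * θ = (2 * (m : ℝ) + 2) * θ + θ by ring,
      show (2 * (m : ℝ) + 1) * θ = (2 * (m : ℝ) + 2) * θ - θ by ring,
      Real.sin_add, Real.sin_sub]
    ring
  rw [Finset.sum_Ico_eq_sum_range, Finset.mul_sum]
  have h1 : ∑ i ∈ Finset.range (d - c),
        2 * Real.cos θ * ((-1 : ℝ) ^ (c + i) * Real.sin ((2 * (c + i : ℕ) + 2) * θ))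
      = ∑ i ∈ Finset.range (d - c), (f (c + i) - f (c + (i + 1))) :=
    Finset.sum_congr rfl fun i _ => hterm (c + i)
  rw [h1]
  have h2 := Finset.sum_range_sub' (fun i => f (c + i)) (d - c)
  rw [h2, show c + (d - c) = d by omega]
  simp [hf]

private lemma eig (p d : ℕ) (hpd : p = 2 * d + 1) (c : ℕ) (hc : c < d) (j : ℕ)
    (hj1 : 1 ≤ j) (hjd : j ≤ d) :
    (∑ a ∈ Finset.range d,
        (-1 : ℝ) ^ a * (((d : ℝ) - max (a : ℝ) (c : ℝ)) * Real.sin ((2 * a + 1) * (π * j / p))))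
      * (4 * Real.cos (π * j / p) ^ 2)
    = (-1 : ℝ) ^ c * Real.sin ((2 * c + 1) * (π * j / p)) := by
  have hp0 : (p : ℝ) ≠ 0 := Nat.cast_ne_zero.mpr (by omega)
  have hp2 : (p : ℝ) = 2 * d + 1 := by exact_mod_cast congrArg (Nat.cast (R := ℝ)) hpd
  set θ := π * j / p with hθ
  have hmax : ∀ a ∈ Finset.range d, ((d : ℝ) - max (a : ℝ) (c : ℝ))
      = ∑ m ∈ Finset.range d, (if max a c ≤ m then (1 : ℝ) else 0) := by
    intro a ha
    rw [Finset.sum_boole]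
    have hfil : (Finset.range d).filter (fun m => max a c ≤ m) = Finset.Ico (max a c) d := by
      ext x
      simp only [Finset.mem_filter, Finset.mem_range, Finset.mem_Ico]
      omega
    rw [Finset.mem_range] at ha
    rw [hfil, Nat.card_Ico, Nat.cast_sub (by omega : max a c ≤ d), Nat.cast_max]
  have stepA : ∑ a ∈ Finset.range d,
        (-1 : ℝ) ^ a * (((d : ℝ) - max (a : ℝ) (c : ℝ)) * Real.sin ((2 * a + 1) * θ))
      = ∑ m ∈ Finset.Ico c d,
          ∑ a ∈ Finset.range (m + 1), (-1 : ℝ) ^ a * Real.sin ((2 * a + 1) * θ) := by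
    have c1 : ∑ a ∈ Finset.range d,
          (-1 : ℝ) ^ a * (((d : ℝ) - max (a : ℝ) (c : ℝ)) * Real.sin ((2 * a + 1) * θ))
        = ∑ a ∈ Finset.range d, ∑ m ∈ Finset.range d,
            (if max a c ≤ m then (1 : ℝ) else 0) * ((-1 : ℝ) ^ a * Real.sin ((2 * a + 1) * θ)) :=
      Finset.sum_congr rfl fun a ha => by
        rw [hmax a ha, Finset.sum_mul, Finset.mul_sum]
        exact Finset.sum_congr rfl fun m _ => by ring
    have c2 : ∀ m ∈ Finset.range d,
        ∑ a ∈ Finset.range d,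
            (if max a c ≤ m then (1 : ℝ) else 0) * ((-1 : ℝ) ^ a * Real.sin ((2 * a + 1) * θ))
          = if c ≤ m then
              ∑ a ∈ Finset.range (m + 1), (-1 : ℝ) ^ a * Real.sin ((2 * a + 1) * θ) else 0 := by
      intro m hm
      rw [Finset.mem_range] at hm
      by_cases hcm : c ≤ m
      · rw [if_pos hcm]
        have e1 : ∑ a ∈ Finset.range d,
              (if max a c ≤ m then (1 : ℝ) else 0) * ((-1 : ℝ) ^ a * Real.sin ((2 * a + 1) * θ))
            = ∑ a ∈ Finset.range d,
              (if a ≤ m then ((-1 : ℝ) ^ a * Real.sin ((2 * a + 1) * θ)) else 0) :=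
          Finset.sum_congr rfl fun a _ => by
            by_cases ham : a ≤ m
            · rw [if_pos (by omega : max a c ≤ m), if_pos ham, one_mul]
            · rw [if_neg (by omega : ¬ max a c ≤ m), if_neg ham, zero_mul]
        rw [e1, ← Finset.sum_filter]
        congr 1
        ext x
        simp only [Finset.mem_filter, Finset.mem_range]
        omega
      · rw [if_neg hcm]
        refine Finset.sum_eq_zero fun a _ => ?_
        rw [if_neg (by omega : ¬ max a c ≤ m), zero_mul]
    have c3 : ∑ m ∈ Finset.range d,
          (if c ≤ m then
            ∑ a ∈ Finset.range (m + 1), (-1 : ℝ) ^ a * Real.sin ((2 * a + 1) * θ) else 0)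
        = ∑ m ∈ Finset.Ico c d,
            ∑ a ∈ Finset.range (m + 1), (-1 : ℝ) ^ a * Real.sin ((2 * a + 1) * θ) := by
      rw [← Finset.sum_filter]
      congr 1
      ext x
      simp only [Finset.mem_filter, Finset.mem_range, Finset.mem_Ico]
      omega
    rw [c1, Finset.sum_comm, Finset.sum_congr rfl c2, c3]
  have hSm : ∀ m : ℕ,
      2 * Real.cos θ * ∑ a ∈ Finset.range (m + 1), (-1 : ℝ) ^ a * Real.sin ((2 * a + 1) * θ)
        = (-1 : ℝ) ^ m * Real.sin ((2 * m + 2) * θ) := by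
    intro m
    rw [sin_tel1 θ (m + 1)]
    push_cast
    rw [show 2 * ((m : ℝ) + 1) * θ = (2 * (m : ℝ) + 2) * θ by ring]
    ring
  rw [stepA]
  have stepB : (∑ m ∈ Finset.Ico c d,
        ∑ a ∈ Finset.range (m + 1), (-1 : ℝ) ^ a * Real.sin ((2 * a + 1) * θ))
          * (4 * Real.cos θ ^ 2)
      = 2 * Real.cos θ
          * ∑ m ∈ Finset.Ico c d, (-1 : ℝ) ^ m * Real.sin ((2 * m + 2) * θ) := by
    rw [Finset.sum_mul, Finset.mul_sum]
    exact Finset.sum_congr rfl fun m _ => by linear_combination (2 * Real.cos θ) * hSm m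
  rw [stepB, sin_tel2 θ c d (by omega)]
  have hzero : Real.sin ((2 * (d : ℝ) + 1) * θ) = 0 := by
    rw [show (2 * (d : ℝ) + 1) * θ = (j : ℝ) * π by rw [hθ, ← hp2]; field_simp]
    exact Real.sin_nat_mul_pi j
  rw [hzero]
  ring

private lemma orth (p d : ℕ) (hpd : p = 2 * d + 1) (hd : 2 ≤ d) (c : ℕ) (hc : c < d) :
    ∑ j ∈ Finset.Icc 1 d, Real.sin (π * j * (2 * c + 1) / p) * Real.sin (π * j / p)
      = if c = 0 then (p : ℝ) / 4 else 0 := by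
  have hp0 : (p : ℝ) ≠ 0 := Nat.cast_ne_zero.mpr (by omega)
  have hp2 : (p : ℝ) = 2 * d + 1 := by exact_mod_cast congrArg (Nat.cast (R := ℝ)) hpd
  have hterm : ∀ j : ℕ, Real.sin (π * j * (2 * c + 1) / p) * Real.sin (π * j / p)
      = (Real.cos (2 * π * c * j / p) - Real.cos (2 * π * ((c : ℝ) + 1) * j / p)) / 2 := by
    intro j
    rw [show 2 * π * (c : ℝ) * j / p = π * j * (2 * c + 1) / p - π * j / p by field_simp; ring,
      show 2 * π * ((c : ℝ) + 1) * j / p = π * j * (2 * c + 1) / p + π * j / p by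
        field_simp; ring,
      Real.cos_sub, Real.cos_add]
    ring
  rw [Finset.sum_congr rfl fun j _ => hterm j]
  rw [← Finset.sum_div, Finset.sum_sub_distrib]
  have hsum2 : ∑ j ∈ Finset.Icc 1 d, Real.cos (2 * π * ((c : ℝ) + 1) * j / p) = -(1 / 2) := by
    rw [← sum_cos_eq p d (c + 1) hpd (fun h => by have := Nat.le_of_dvd (by omega) h; omega)]
    exact Finset.sum_congr rfl fun j _ => by push_cast; ring_nf
  by_cases hc0 : c = 0
  · subst hc0
    rw [if_pos rfl]
    have hsum1 : ∑ j ∈ Finset.Icc 1 d, Real.cos (2 * π * ((0 : ℕ) : ℝ) * j / p)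
        = (d : ℝ) := by
      have : ∀ j ∈ Finset.Icc 1 d, Real.cos (2 * π * ((0 : ℕ) : ℝ) * j / p) = 1 := by
        intro j _
        norm_num
      rw [Finset.sum_congr rfl this, Finset.sum_const, Nat.card_Icc]
      simp
    rw [hsum1, hsum2, hp2]
    ring
  · rw [if_neg hc0]
    have hsum1 : ∑ j ∈ Finset.Icc 1 d, Real.cos (2 * π * (c : ℝ) * j / p) = -(1 / 2) := by
      rw [← sum_cos_eq p d c hpd (fun h => by have := Nat.le_of_dvd (by omega) h; omega)]
    rw [hsum1, hsum2]
    ring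

open Real

/-- `delta d g c` is `δ_g^{(2c)}` with `δ_0^{(0)} = 1`, `δ_0^{(2c)} = 0` for `c ≠ 0`,
and `δ_{g+1}^{(2c)} = ∑_{a=0}^{d-1} (d - max a c) δ_g^{(2a)}`; so `δ_1^{(2c)} = d - c`. -/
def delta (d : ℕ) : ℕ → ℕ → ℚ
  | 0, c => if c = 0 then 1 else 0
  | g + 1, c => ∑ a ∈ Finset.range d, ((d : ℚ) - max a c) * delta d g a

/-- Verlinde-type formula:
`(-1)^c δ_g^{(2c)} = (4/p) ∑_{j=1}^{(p-1)/2} sin(πj(2c+1)/p) sin(πj/p) Λ_j^g` with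
`Λ_j = ⌈(p-1)/4⌉ + 2 ∑_{k=1}^{(p-3)/2} (-1)^k ⌈(p-2k-1)/4⌉ cos(2kjπ/p)`. -/
theorem delta_closed_formula (p d : ℕ) (hp : p.Prime) (hp5 : 5 ≤ p) (hpd : p = 2 * d + 1)
    (g c : ℕ) (hg : 1 ≤ g) (hc : c < d) :
    (-1 : ℝ) ^ c * ((delta d g c : ℚ) : ℝ)
      = 4 / p * ∑ j ∈ Finset.Icc 1 ((p - 1) / 2),
          Real.sin (π * j * (2 * c + 1) / p) * Real.sin (π * j / p) *
            ((⌈((p : ℚ) - 1) / 4⌉ : ℝ)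
              + 2 * ∑ k ∈ Finset.Icc 1 ((p - 3) / 2),
                  (-1 : ℝ) ^ k * (⌈((p : ℚ) - 2 * k - 1) / 4⌉ : ℝ)
                    * Real.cos (2 * k * j * π / p)) ^ g := by
  have hd2 : 2 ≤ d := by omega
  have hp0 : (p : ℝ) ≠ 0 := Nat.cast_ne_zero.mpr (by omega)
  set L : ℕ → ℝ :=
    fun j => Bc d 0 + 2 * ∑ k ∈ Finset.Icc 1 (d - 1), Bc d k * Real.cos (2 * k * j * π / p)
    with hL
  have hstep : ∀ a : ℕ, (-1 : ℝ) ^ a * (-1 : ℝ) ^ a = 1 := fun a => by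
    rw [← pow_add]
    exact Even.neg_one_pow ⟨a, rfl⟩
  have key : ∀ g : ℕ, ∀ c : ℕ, c < d →
      (-1 : ℝ) ^ c * ((delta d g c : ℚ) : ℝ)
        = 4 / p * ∑ j ∈ Finset.Icc 1 d,
            Real.sin (π * j * (2 * c + 1) / p) * Real.sin (π * j / p) * (L j) ^ g := by
    intro g
    induction g with
    | zero =>
      intro c hc
      have h1 : ∀ j ∈ Finset.Icc 1 d,
          Real.sin (π * j * (2 * c + 1) / p) * Real.sin (π * j / p) * (L j) ^ 0
            = Real.sin (π * j * (2 * c + 1) / p) * Real.sin (π * j / p) := fun j _ => by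
        rw [pow_zero, mul_one]
      rw [Finset.sum_congr rfl h1, orth p d hpd hd2 c hc]
      by_cases hc0 : c = 0
      · subst hc0
        rw [if_pos rfl]
        simp only [delta, if_pos rfl, ↓reduceIte, pow_zero, one_mul, Rat.cast_one]
        field_simp
      · rw [if_neg hc0]
        simp [delta, hc0]
    | succ g ih =>
      intro c hc
      have heig : ∀ j ∈ Finset.Icc 1 d,
          ∑ a ∈ Finset.range d,
              (-1 : ℝ) ^ a * (((d : ℝ) - max (a : ℝ) (c : ℝ))
                * Real.sin (π * j * (2 * a + 1) / p))
            = (-1 : ℝ) ^ c * Real.sin (π * j * (2 * c + 1) / p) * L j := by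
        intro j hj
        rw [Finset.mem_Icc] at hj
        have harg : ∀ a : ℕ, π * (j : ℝ) * (2 * a + 1) / p = (2 * (a : ℝ) + 1) * (π * j / p) :=
          fun a => by ring
        have he := eig p d hpd c hc j hj.1 hj.2
        have hl : L j * (4 * Real.cos (π * j / p) ^ 2) = 1 := by
          rw [hL]
          exact lam_eq p d hpd hd2 j hj.1 hj.2
        have hx : ∑ a ∈ Finset.range d,
            (-1 : ℝ) ^ a * (((d : ℝ) - max (a : ℝ) (c : ℝ))
              * Real.sin (π * j * (2 * a + 1) / p))
            = ∑ a ∈ Finset.range d,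
            (-1 : ℝ) ^ a * (((d : ℝ) - max (a : ℝ) (c : ℝ))
              * Real.sin ((2 * a + 1) * (π * j / p))) :=
          Finset.sum_congr rfl fun a _ => by rw [harg a]
        rw [hx, harg c]
        calc (∑ a ∈ Finset.range d,
            (-1 : ℝ) ^ a * (((d : ℝ) - max (a : ℝ) (c : ℝ))
              * Real.sin ((2 * a + 1) * (π * j / p))))
            = (∑ a ∈ Finset.range d,
              (-1 : ℝ) ^ a * (((d : ℝ) - max (a : ℝ) (c : ℝ))
                * Real.sin ((2 * a + 1) * (π * j / p))))
              * (L j * (4 * Real.cos (π * j / p) ^ 2)) := by rw [hl, mul_one]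
          _ = ((∑ a ∈ Finset.range d,
              (-1 : ℝ) ^ a * (((d : ℝ) - max (a : ℝ) (c : ℝ))
                * Real.sin ((2 * a + 1) * (π * j / p))))
              * (4 * Real.cos (π * j / p) ^ 2)) * L j := by ring
          _ = (-1 : ℝ) ^ c * Real.sin ((2 * c + 1) * (π * j / p)) * L j := by rw [he]
      have hrec : ((delta d (g + 1) c : ℚ) : ℝ)
          = ∑ a ∈ Finset.range d,
              ((d : ℝ) - max (a : ℝ) (c : ℝ)) * ((delta d g a : ℚ) : ℝ) := by
        simp only [delta]
        push_cast
        rfl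
      calc (-1 : ℝ) ^ c * ((delta d (g + 1) c : ℚ) : ℝ)
          = ∑ a ∈ Finset.range d, ((-1 : ℝ) ^ c * (-1 : ℝ) ^ a)
              * (((d : ℝ) - max (a : ℝ) (c : ℝ))
                * ((-1 : ℝ) ^ a * ((delta d g a : ℚ) : ℝ))) := by
            rw [hrec, Finset.mul_sum]
            exact Finset.sum_congr rfl fun a _ => by
              linear_combination (-(((d : ℝ) - max (a : ℝ) (c : ℝ))
                * ((delta d g a : ℚ) : ℝ) * (-1 : ℝ) ^ c)) * hstep a
        _ = ∑ a ∈ Finset.range d, ((-1 : ℝ) ^ c * (-1 : ℝ) ^ a)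
              * (((d : ℝ) - max (a : ℝ) (c : ℝ))
                * (4 / p * ∑ j ∈ Finset.Icc 1 d,
                    Real.sin (π * j * (2 * a + 1) / p) * Real.sin (π * j / p) * (L j) ^ g)) :=
            Finset.sum_congr rfl fun a ha => by
              rw [ih a (Finset.mem_range.mp ha)]
        _ = ∑ j ∈ Finset.Icc 1 d, ∑ a ∈ Finset.range d,
              (4 / p) * (Real.sin (π * j / p) * (L j) ^ g
                * ((-1 : ℝ) ^ c * ((-1 : ℝ) ^ a * (((d : ℝ) - max (a : ℝ) (c : ℝ))
                    * Real.sin (π * j * (2 * a + 1) / p))))) := by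
            rw [show (∑ a ∈ Finset.range d, ((-1 : ℝ) ^ c * (-1 : ℝ) ^ a)
                  * (((d : ℝ) - max (a : ℝ) (c : ℝ))
                    * (4 / p * ∑ j ∈ Finset.Icc 1 d,
                        Real.sin (π * j * (2 * a + 1) / p) * Real.sin (π * j / p) * (L j) ^ g)))
                = ∑ a ∈ Finset.range d, ∑ j ∈ Finset.Icc 1 d,
                    (4 / p) * (Real.sin (π * j / p) * (L j) ^ g
                      * ((-1 : ℝ) ^ c * ((-1 : ℝ) ^ a * (((d : ℝ) - max (a : ℝ) (c : ℝ))
                          * Real.sin (π * j * (2 * a + 1) / p)))))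
              from Finset.sum_congr rfl fun a _ => by
                simp only [Finset.mul_sum]
                exact Finset.sum_congr rfl fun j _ => by ring]
            exact Finset.sum_comm
        _ = ∑ j ∈ Finset.Icc 1 d, (4 / p) * (Real.sin (π * j / p) * (L j) ^ g
              * ((-1 : ℝ) ^ c * ∑ a ∈ Finset.range d,
                  (-1 : ℝ) ^ a * (((d : ℝ) - max (a : ℝ) (c : ℝ))
                    * Real.sin (π * j * (2 * a + 1) / p)))) := by
            refine Finset.sum_congr rfl fun j _ => ?_
            simp only [Finset.mul_sum]
        _ = 4 / p * ∑ j ∈ Finset.Icc 1 d,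
              Real.sin (π * j * (2 * c + 1) / p) * Real.sin (π * j / p) * (L j) ^ (g + 1) := by
            rw [Finset.mul_sum]
            refine Finset.sum_congr rfl fun j hj => ?_
            rw [heig j hj]
            linear_combination (4 / (p : ℝ) * Real.sin (π * j / p) * (L j) ^ g
              * Real.sin (π * j * (2 * c + 1) / p) * L j) * hstep c
  have e1 : (p - 1) / 2 = d := by omega
  have e2 : (p - 3) / 2 = d - 1 := by omega
  rw [e1, e2]
  have hceil0 : ((⌈((p : ℚ) - 1) / 4⌉ : ℤ) : ℝ) = Bc d 0 := by
    rw [Bc, g2, pow_zero, one_mul]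
    congr 2
    push_cast [hpd]
    ring
  have hceil : ∀ k : ℕ, ((⌈((p : ℚ) - 2 * k - 1) / 4⌉ : ℤ) : ℝ) = (-1 : ℝ) ^ k * Bc d k := by
    intro k
    rw [Bc, g2, ← mul_assoc, hstep k, one_mul]
    congr 2
    push_cast [hpd]
    ring
  have hΛ : ∀ j : ℕ, ((⌈((p : ℚ) - 1) / 4⌉ : ℝ)
      + 2 * ∑ k ∈ Finset.Icc 1 (d - 1),
          (-1 : ℝ) ^ k * (⌈((p : ℚ) - 2 * k - 1) / 4⌉ : ℝ) * Real.cos (2 * k * j * π / p))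
      = L j := by
    intro j
    rw [hL]
    simp only
    rw [hceil0]
    congr 1
    rw [Finset.mul_sum, Finset.mul_sum]
    refine Finset.sum_congr rfl fun k _ => ?_
    rw [hceil k]
    linear_combination (2 * Bc d k * Real.cos (2 * k * j * π / p)) * hstep k
  have hsumΛ : ∑ j ∈ Finset.Icc 1 d,
      Real.sin (π * j * (2 * c + 1) / p) * Real.sin (π * j / p) *
        ((⌈((p : ℚ) - 1) / 4⌉ : ℝ)
          + 2 * ∑ k ∈ Finset.Icc 1 (d - 1),
              (-1 : ℝ) ^ k * (⌈((p : ℚ) - 2 * k - 1) / 4⌉ : ℝ)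
                * Real.cos (2 * k * j * π / p)) ^ g
      = ∑ j ∈ Finset.Icc 1 d,
          Real.sin (π * j * (2 * c + 1) / p) * Real.sin (π * j / p) * (L j) ^ g :=
    Finset.sum_congr rfl fun j _ => by rw [hΛ j]
  rw [hsumΛ]
  exact key g c hc
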